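/- Let F be a finite family of convex sets in ℝ^d partitioned into d+1 nonempty color classes F_1, …, F_{d+1}, and let α > 0. Suppose that at least α·|F_1|·|F_2|⋯|F_{d+1}| of the colorful tuples (D_1, …, D_{d+1}) with D_i ∈ F_i satisfy D_1 ∩ ⋯ ∩ D_{d+1} ≠ ∅. Then there exists an index i and a subfamily G ⊆ F_i with |G| ≥ (α/(d+1))·|F_i| such that the intersection of all sets in G is nonempty. -/

import Mathlib

open scoped Classical

noncomputable section FCHAux

variable {d : ℕ}


variable {d : ℕ}

/-- strict lexicographic order on ℝ^d -/
def lexLt (x y : EuclideanSpace ℝ (Fin d)) : Prop :=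
  ∃ j : Fin d, (∀ j', j' < j → x j' = y j') ∧ x j < y j

lemma lexLt_irrefl (x : EuclideanSpace ℝ (Fin d)) : ¬ lexLt x x := by
  rintro ⟨j, -, hj⟩; exact lt_irrefl _ hj

lemma lexLt_or {x y : EuclideanSpace ℝ (Fin d)} (h : x ≠ y) : lexLt x y ∨ lexLt y x := by
  have hne : ∃ j, x j ≠ y j := by
    by_contra hc; push_neg at hc; exact h (PiLp.ext hc)
  obtain ⟨j, hj, hmin⟩ := Finset.exists_min_image (Finset.univ.filter fun j => x j ≠ y j)
    id ⟨hne.choose, by simpa using hne.choose_spec⟩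
  have hj' : x j ≠ y j := by simpa using hj
  have heq : ∀ j', j' < j → x j' = y j' := by
    intro j' hj'lt
    by_contra hne'
    exact absurd (hmin j' (by simpa using hne')) (by simpa using (not_le.2 hj'lt))
  rcases Ne.lt_or_gt hj' with hlt | hlt
  · exact Or.inl ⟨j, heq, hlt⟩
  · exact Or.inr ⟨j, fun j' h' => (heq j' h').symm, hlt⟩

/-- lexicographically negative vector -/
def negLex (v : EuclideanSpace ℝ (Fin d)) : Prop :=
  ∃ j : Fin d, (∀ j', j' < j → v j' = 0) ∧ v j < 0

lemma lexLt_iff_negLex {x y : EuclideanSpace ℝ (Fin d)} : lexLt x y ↔ negLex (x - y) := by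
  constructor
  · rintro ⟨j, h1, h2⟩
    exact ⟨j, fun j' hj' => by simp [PiLp.sub_apply, h1 j' hj'], by simp [PiLp.sub_apply]; linarith⟩
  · rintro ⟨j, h1, h2⟩
    refine ⟨j, fun j' hj' => ?_, ?_⟩
    · have := h1 j' hj'; simp [PiLp.sub_apply] at this; linarith
    · simp [PiLp.sub_apply] at h2; linarith

lemma negLex_add {v w : EuclideanSpace ℝ (Fin d)} (hv : negLex v) (hw : negLex w) :
    negLex (v + w) := by
  obtain ⟨j, h1, h2⟩ := hv
  obtain ⟨k, g1, g2⟩ := hw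
  rcases lt_trichotomy j k with hlt | rfl | hlt
  · exact ⟨j, fun j' hj' => by simp [PiLp.add_apply, h1 j' hj', g1 j' (hj'.trans hlt)],
      by simp [PiLp.add_apply, g1 j hlt]; linarith⟩
  · exact ⟨j, fun j' hj' => by simp [PiLp.add_apply, h1 j' hj', g1 j' hj'],
      by simp [PiLp.add_apply]; linarith⟩
  · exact ⟨k, fun j' hj' => by simp [PiLp.add_apply, g1 j' hj', h1 j' (hj'.trans hlt)],
      by simp [PiLp.add_apply, h1 k hlt]; linarith⟩

lemma negLex_smul {c : ℝ} (hc : 0 < c) {v : EuclideanSpace ℝ (Fin d)} (hv : negLex v) :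
    negLex (c • v) := by
  obtain ⟨j, h1, h2⟩ := hv
  exact ⟨j, fun j' hj' => by simp [PiLp.smul_apply, h1 j' hj'],
    by simp [PiLp.smul_apply]; exact mul_neg_of_pos_of_neg hc h2⟩

lemma negLex_ne_zero {v : EuclideanSpace ℝ (Fin d)} (hv : negLex v) : v ≠ 0 := by
  obtain ⟨j, -, h2⟩ := hv
  intro hv0
  rw [hv0] at h2
  simp at h2

lemma negLex_sum {ι : Type*} {s : Finset ι} (hs : s.Nonempty) {c : ι → ℝ}
    (hc : ∀ k ∈ s, 0 < c k) {v : ι → EuclideanSpace ℝ (Fin d)}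
    (hv : ∀ k ∈ s, negLex (v k)) : negLex (∑ k ∈ s, c k • v k) := by
  induction hs using Finset.Nonempty.cons_induction with
  | singleton k => simpa using negLex_smul (by simpa using hc) (by simpa using hv)
  | cons k s hk hs ih =>
      rw [Finset.sum_cons]
      exact negLex_add (negLex_smul (hc k (by simp)) (hv k (by simp)))
        (ih (fun x hx => hc x (by simp [hx])) (fun x hx => hv x (by simp [hx])))

lemma exists_lexmin_aux (m : ℕ) : ∀ (k : ℕ), d ≤ k + m →
    ∀ (S : Set (EuclideanSpace ℝ (Fin d))), IsCompact S → S.Nonempty →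
    ∃ p ∈ S, ∀ x ∈ S, ¬ ∃ j : Fin d, k ≤ (j : ℕ) ∧ (∀ j', j' < j → x j' = p j') ∧ x j < p j := by
  induction m with
  | zero =>
      intro k hk S _ hne
      obtain ⟨p, hp⟩ := hne
      exact ⟨p, hp, fun x hx ⟨j, hkj, _, _⟩ => absurd (lt_of_lt_of_le j.2 (by omega)) (not_lt.2 hkj)⟩
  | succ m ih =>
      intro k hk S hS hne
      by_cases hkd : d ≤ k
      · obtain ⟨p, hp⟩ := hne
        exact ⟨p, hp, fun x hx ⟨j, hkj, _, _⟩ => absurd (lt_of_lt_of_le j.2 hkd) (not_lt.2 hkj)⟩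
      · push_neg at hkd
        set e : Fin d := ⟨k, hkd⟩ with he
        have hcont : Continuous fun x : EuclideanSpace ℝ (Fin d) => x e :=
          (EuclideanSpace.proj e).continuous
        obtain ⟨z, hzS, hz⟩ := hS.exists_isMinOn hne hcont.continuousOn
        set S' : Set (EuclideanSpace ℝ (Fin d)) := S ∩ {x | x e = z e} with hS'def
        have hS'cpt : IsCompact S' :=
          hS.inter_right (isClosed_eq hcont continuous_const)
        have hS'ne : S'.Nonempty := ⟨z, hzS, rfl⟩
        obtain ⟨p, hpS', hp⟩ := ih (k + 1) (by omega) S' hS'cpt hS'ne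
        refine ⟨p, hpS'.1, ?_⟩
        rintro x hx ⟨j, hkj, hagree, hlt⟩
        have hpe : p e = z e := hpS'.2
        rcases eq_or_lt_of_le hkj with heq | hlt'
        · have hej : e = j := Fin.ext heq
          subst hej
          have : z e ≤ x e := hz hx
          rw [hpe] at hlt; linarith
        · have hej : e < j := hlt'
          have hxe : x e = p e := hagree e hej
          have hxS' : x ∈ S' := ⟨hx, show x e = z e by rw [hxe, hpe]⟩
          exact hp x hxS' ⟨j, by omega, hagree, hlt⟩

lemma exists_lexmin {S : Set (EuclideanSpace ℝ (Fin d))} (hS : IsCompact S)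
    (hne : S.Nonempty) : ∃ p ∈ S, ∀ x ∈ S, ¬ lexLt x p := by
  obtain ⟨p, hp, hmin⟩ := exists_lexmin_aux d 0 (by omega) S hS hne
  exact ⟨p, hp, fun x hx ⟨j, h1, h2⟩ => hmin x hx ⟨j, by omega, h1, h2⟩⟩

lemma combo_eq {ι : Type*} (s : Finset ι) (a : ι → ℝ) (ha : ∑ k ∈ s, a k = 1)
    (p : EuclideanSpace ℝ (Fin d)) (q : ι → EuclideanSpace ℝ (Fin d)) :
    p + ∑ k ∈ s, a k • (q k - p) = ∑ k ∈ s, a k • q k := by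
  have h1 : ∑ k ∈ s, a k • (q k - p) = (∑ k ∈ s, a k • q k) - (∑ k ∈ s, a k) • p := by
    rw [Finset.sum_smul, ← Finset.sum_sub_distrib]
    exact Finset.sum_congr rfl fun k _ => smul_sub _ _ _
  rw [h1, ha, one_smul]; abel

lemma sum_split (c : Fin (d+1) → ℝ) (v : Fin (d+1) → EuclideanSpace ℝ (Fin d))
    (hsum : ∑ k, c k • v k = 0) :
    (∑ k ∈ Finset.univ.filter fun k => 0 < c k, c k • v k)
      + ∑ k ∈ Finset.univ.filter fun k => c k < 0, c k • v k = 0 := by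
  classical
  rw [← Finset.sum_union (by
    simp only [Finset.disjoint_left, Finset.mem_filter]
    rintro a ⟨-, h1⟩ ⟨-, h2⟩; linarith)]
  rw [← Finset.filter_or]
  rw [Finset.sum_filter_of_ne (fun k _ hk => ?_)]
  · exact hsum
  · rcases lt_or_gt_of_ne (fun h0 : c k = 0 => hk (by simp [h0])) with h | h
    · exact Or.inr h
    · exact Or.inl h

lemma keyLinAux (A : Fin (d+1) → Set (EuclideanSpace ℝ (Fin d)))
    (hA : ∀ j, Convex ℝ (A j)) (p : EuclideanSpace ℝ (Fin d)) (hp : ∀ j, p ∈ A j)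
    (q : Fin (d+1) → EuclideanSpace ℝ (Fin d)) (hq : ∀ k j, j ≠ k → q k ∈ A j)
    (hlt : ∀ k, lexLt (q k) p)
    (c : Fin (d+1) → ℝ) (hsum : ∑ k, c k • (q k - p) = 0)
    (hP : (Finset.univ.filter fun k => 0 < c k).Nonempty)
    (hN : (Finset.univ.filter fun k => c k < 0).Nonempty)
    (hts : ∑ k ∈ Finset.univ.filter (fun k => c k < 0), (-c k)
        ≤ ∑ k ∈ Finset.univ.filter (fun k => 0 < c k), c k) :
    ∃ z, (∀ j, z ∈ A j) ∧ lexLt z p := by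
  classical
  set P := Finset.univ.filter fun k => 0 < c k with hPdef
  set N := Finset.univ.filter fun k => c k < 0 with hNdef
  set s := ∑ k ∈ P, c k with hsdef
  set t := ∑ k ∈ N, (-c k) with htdef
  have hs : 0 < s := Finset.sum_pos (fun k hk => (Finset.mem_filter.1 hk).2) hP
  have ht : 0 < t := Finset.sum_pos (fun k hk => by
    have := (Finset.mem_filter.1 hk).2; linarith) hN
  set w := ∑ k ∈ P, c k • (q k - p) with hwdef
  have hwneg : negLex w := negLex_sum hP (fun k hk => (Finset.mem_filter.1 hk).2)
    (fun k _ => lexLt_iff_negLex.1 (hlt k))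
  have hwN : w = ∑ k ∈ N, (-c k) • (q k - p) := by
    have h0 := sum_split c (fun k => q k - p) hsum
    rw [hwdef]
    have : ∑ k ∈ N, (-c k) • (q k - p) = -∑ k ∈ N, c k • (q k - p) := by
      rw [← Finset.sum_neg_distrib]
      exact Finset.sum_congr rfl fun k _ => neg_smul _ _
    rw [this]
    rw [← hPdef, ← hNdef] at h0
    linear_combination (norm := abel) h0
  set z := p + s⁻¹ • w with hzdef
  have hzP : z = ∑ k ∈ P, (s⁻¹ * c k) • q k := by
    rw [hzdef, hwdef, Finset.smul_sum]
    simp_rw [smul_smul]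
    exact combo_eq P (fun k => s⁻¹ * c k)
      (by rw [← Finset.mul_sum, ← hsdef, inv_mul_cancel₀ hs.ne']) p q
  have hy : p + t⁻¹ • w = ∑ k ∈ N, (t⁻¹ * (-c k)) • q k := by
    rw [hwN, Finset.smul_sum]
    simp_rw [smul_smul]
    exact combo_eq N (fun k => t⁻¹ * (-c k))
      (by rw [← Finset.mul_sum, ← htdef, inv_mul_cancel₀ ht.ne']) p q
  refine ⟨z, fun j => ?_, ?_⟩
  · by_cases hjP : j ∈ P
    · have hyA : p + t⁻¹ • w ∈ A j := by
        rw [hy]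
        refine (hA j).sum_mem (fun k hk => by
          have := (Finset.mem_filter.1 hk).2
          have h2 : 0 < -c k := by linarith
          positivity) ?_ (fun k hk => ?_)
        · rw [← Finset.mul_sum, ← htdef, inv_mul_cancel₀ ht.ne']
        · refine hq k j (fun hjk => ?_)
          have h1 := (Finset.mem_filter.1 hjP).2
          have h2 := (Finset.mem_filter.1 hk).2
          rw [hjk] at h1; linarith
      have hz' : z = (1 - t/s) • p + (t/s) • (p + t⁻¹ • w) := by
        rw [hzdef]
        match_scalars
        · field_simp; ring
        · field_simp
      rw [hz']
      exact hA j (hp j) hyA (by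
        have : t / s ≤ 1 := (div_le_one hs).2 hts
        linarith) (by positivity) (by ring)
    · rw [hzP]
      refine (hA j).sum_mem (fun k hk => by
        have := (Finset.mem_filter.1 hk).2; positivity) ?_ (fun k hk => ?_)
      · rw [← Finset.mul_sum, ← hsdef, inv_mul_cancel₀ hs.ne']
      · exact hq k j (fun hjk => hjP (by rw [hjk]; exact hk))
  · rw [lexLt_iff_negLex, hzdef, add_sub_cancel_left]
    exact negLex_smul (by positivity) hwneg

lemma keyLin (A : Fin (d+1) → Set (EuclideanSpace ℝ (Fin d)))
    (hA : ∀ j, Convex ℝ (A j)) (p : EuclideanSpace ℝ (Fin d)) (hp : ∀ j, p ∈ A j)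
    (q : Fin (d+1) → EuclideanSpace ℝ (Fin d)) (hq : ∀ k j, j ≠ k → q k ∈ A j)
    (hlt : ∀ k, lexLt (q k) p) :
    ∃ z, (∀ j, z ∈ A j) ∧ lexLt z p := by
  classical
  have hdep : ¬ LinearIndependent ℝ (fun k => q k - p) := by
    intro hli
    have hcard := hli.fintype_card_le_finrank
    rw [finrank_euclideanSpace_fin, Fintype.card_fin] at hcard
    omega
  rw [Fintype.linearIndependent_iff] at hdep
  push_neg at hdep
  obtain ⟨c, hc0, i, hci⟩ := hdep
  -- if P nonempty then N nonempty
  have hPtoN : ∀ (c' : Fin (d+1) → ℝ), (∑ k, c' k • (q k - p) = 0) →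
      (Finset.univ.filter fun k => 0 < c' k).Nonempty →
      (Finset.univ.filter fun k => c' k < 0).Nonempty := by
    intro c' hsum' hP'
    by_contra hN'
    rw [Finset.not_nonempty_iff_eq_empty] at hN'
    have h0 := sum_split c' (fun k => q k - p) hsum'
    rw [hN', Finset.sum_empty, add_zero] at h0
    exact negLex_ne_zero (negLex_sum hP' (fun k hk => (Finset.mem_filter.1 hk).2)
      (fun k _ => lexLt_iff_negLex.1 (hlt k))) h0
  have hsumneg : ∑ k, (-c) k • (q k - p) = 0 := by
    simp only [Pi.neg_apply, neg_smul, Finset.sum_neg_distrib, hc0, neg_zero]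
  have hPN : (Finset.univ.filter fun k => 0 < (-c) k)
      = (Finset.univ.filter fun k => c k < 0) := by
    ext k; simp [neg_pos]
  have hNP : (Finset.univ.filter fun k => (-c) k < 0)
      = (Finset.univ.filter fun k => 0 < c k) := by
    ext k; simp
  have hP : (Finset.univ.filter fun k => 0 < c k).Nonempty := by
    rcases Ne.lt_or_gt hci with hlt' | hlt'
    · have hNne : (Finset.univ.filter fun k => 0 < (-c) k).Nonempty :=
        ⟨i, by simp [neg_pos, hlt']⟩
      have := hPtoN (-c) hsumneg hNne
      rwa [hNP] at this
    · exact ⟨i, by simp [hlt']⟩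
  have hN : (Finset.univ.filter fun k => c k < 0).Nonempty := hPtoN c hc0 hP
  rcases le_total (∑ k ∈ Finset.univ.filter (fun k => c k < 0), (-c k))
      (∑ k ∈ Finset.univ.filter (fun k => 0 < c k), c k) with hts | hts
  · exact keyLinAux A hA p hp q hq hlt c hc0 hP hN hts
  · refine keyLinAux A hA p hp q hq hlt (-c) hsumneg (by rwa [hPN]) (by rwa [hNP]) ?_
    rw [hPN, hNP]
    simpa using hts

lemma card_fiber_eq {d : ℕ} (n : Fin (d+1) → ℕ) (i : Fin (d+1)) (a : Fin (n i)) :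
    (Finset.univ.filter fun t : (j : Fin (d+1)) → Fin (n j) => t i = a).card * n i
      = ∏ j, n j := by
  classical
  have hsame : ∀ b : Fin (n i),
      (Finset.univ.filter fun t : (j : Fin (d+1)) → Fin (n j) => t i = b).card
        = (Finset.univ.filter fun t : (j : Fin (d+1)) → Fin (n j) => t i = a).card := by
    intro b
    apply Finset.card_bij' (i := fun t _ => Function.update t i a)
      (j := fun t _ => Function.update t i b)
    case hi => intro t ht; simp
    case hj => intro t ht; simp
    case left_inv =>
      intro t ht
      rw [Finset.mem_filter] at ht
      rw [Function.update_idem, ← ht.2, Function.update_eq_self]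
    case right_inv =>
      intro t ht
      rw [Finset.mem_filter] at ht
      rw [Function.update_idem, ← ht.2, Function.update_eq_self]
  have h2 : (Finset.univ : Finset ((j : Fin (d+1)) → Fin (n j))).card
      = ∑ b : Fin (n i),
        (Finset.univ.filter fun t : (j : Fin (d+1)) → Fin (n j) => t i = b).card :=
    Finset.card_eq_sum_card_fiberwise (fun t _ => Finset.mem_univ (t i))
  have h3 : (Finset.univ : Finset ((j : Fin (d+1)) → Fin (n j))).card = ∏ j, n j := by
    simp [Fintype.card_pi]
  rw [← h3, h2]
  simp [hsame, mul_comm]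

end FCHAux

/-- **Fractional colorful Helly theorem** (Bárány–Fodor–Montejano–Oliveros–Pór):
the `i`-th color class is the indexed family `F i : Fin (n i) → Set ℝ^d` (repetitions
allowed), a colorful tuple is a choice function `g` with `g i` an index into the `i`-th
class. -/
theorem fractional_colorful_helly (d : ℕ) (α : ℝ) (hα : 0 < α)
    (n : Fin (d + 1) → ℕ) (hn : ∀ i, 1 ≤ n i)
    (F : (i : Fin (d + 1)) → Fin (n i) → Set (EuclideanSpace ℝ (Fin d)))
    (hconv : ∀ i j, Convex ℝ (F i j))
    (h : α * ∏ i, (n i : ℝ) ≤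
      (((Finset.univ : Finset ((i : Fin (d + 1)) → Fin (n i))).filter fun g =>
          (⋂ i, F i (g i)).Nonempty).card : ℝ)) :
    ∃ i : Fin (d + 1), ∃ G : Finset (Fin (n i)),
      (α / (d + 1)) * (n i : ℝ) ≤ (G.card : ℝ) ∧ (⋂ j ∈ G, F i j).Nonempty := by
  classical
  by_contra hcon
  push_neg at hcon
  set Good : Finset ((i : Fin (d + 1)) → Fin (n i)) :=
    (Finset.univ : Finset ((i : Fin (d + 1)) → Fin (n i))).filter fun g =>
      (⋂ i, F i (g i)).Nonempty with hGoodDef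
  -- pick a witness point for each good tuple
  have hxx : ∀ g : (i : Fin (d + 1)) → Fin (n i), ∃ x : EuclideanSpace ℝ (Fin d),
      g ∈ Good → ∀ i, x ∈ F i (g i) := by
    intro g
    by_cases hg : g ∈ Good
    · obtain ⟨x, hx⟩ := (Finset.mem_filter.1 hg).2
      exact ⟨x, fun _ i => Set.mem_iInter.1 hx i⟩
    · exact ⟨0, fun hh => absurd hh hg⟩
  choose xpt hxpt using hxx
  -- compact convex subfamilies
  set F' : (i : Fin (d + 1)) → Fin (n i) → Set (EuclideanSpace ℝ (Fin d)) :=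
    fun i j => convexHull ℝ (xpt '' {g | g ∈ Good ∧ g i = j}) with hF'Def
  have hF'sub : ∀ i j, F' i j ⊆ F i j := by
    intro i j
    apply convexHull_min _ (hconv i j)
    rintro x ⟨g, ⟨hg, rfl⟩, rfl⟩
    exact hxpt g hg i
  have hF'conv : ∀ i j, Convex ℝ (F' i j) := fun i j => convex_convexHull _ _
  have hF'cpt : ∀ i j, IsCompact (F' i j) := by
    intro i j
    apply Set.Finite.isCompact_convexHull
    exact (Good.finite_toSet.subset fun g hg => hg.1).image xpt
  have hxF' : ∀ g ∈ Good, ∀ i, xpt g ∈ F' i (g i) := fun g hg i =>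
    subset_convexHull _ _ ⟨g, ⟨hg, rfl⟩, rfl⟩
  -- lexmin point and special color for each good tuple
  have hmain : ∀ g : (i : Fin (d + 1)) → Fin (n i),
      ∃ (p : EuclideanSpace ℝ (Fin d)) (i : Fin (d + 1)), g ∈ Good →
      (p ∈ ⋂ j, F' j (g j)) ∧
      (∀ x, (∀ j, j ≠ i → x ∈ F' j (g j)) → ¬ lexLt x p) := by
    intro g
    by_cases hg : g ∈ Good
    · have hK : IsCompact (⋂ j, F' j (g j)) :=
        IsCompact.of_isClosed_subset (hF'cpt 0 (g 0))
          (isClosed_iInter fun j => (hF'cpt j (g j)).isClosed) (Set.iInter_subset _ 0)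
      have hKne : (⋂ j, F' j (g j)).Nonempty :=
        ⟨xpt g, Set.mem_iInter.2 (hxF' g hg)⟩
      obtain ⟨p, hpK, hpmin⟩ := exists_lexmin hK hKne
      have hex : ∃ i : Fin (d + 1), ∀ x, (∀ j, j ≠ i → x ∈ F' j (g j)) → ¬ lexLt x p := by
        by_contra hcc
        push_neg at hcc
        choose qq hq1 hq2 using hcc
        obtain ⟨z, hz1, hz2⟩ := keyLin (fun j => F' j (g j)) (fun j => hF'conv _ _) p
          (fun j => Set.mem_iInter.1 hpK j) qq (fun k j hjk => hq1 k j hjk) hq2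
        exact hpmin z (Set.mem_iInter.2 hz1) hz2
      obtain ⟨i, hi⟩ := hex
      exact ⟨p, i, fun _ => ⟨hpK, hi⟩⟩
    · exact ⟨0, 0, fun hh => absurd hh hg⟩
  choose pf ig hig using hmain
  -- default index and restriction map
  set d0 : (i : Fin (d + 1)) → Fin (n i) := fun i => ⟨0, hn i⟩ with hd0
  -- two good tuples in the same fiber have the same lexmin point
  have hfiber : ∀ (i : Fin (d + 1)) (g g' : (i : Fin (d + 1)) → Fin (n i)),
      g ∈ Good → g' ∈ Good → ig g = i → ig g' = i →
      Function.update g i (d0 i) = Function.update g' i (d0 i) →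
      ¬ lexLt (pf g') (pf g) := by
    intro i g g' hg hg' higg higg' hupd
    have hsame : ∀ j, j ≠ i → g j = g' j := by
      intro j hj
      have := congrFun hupd j
      rwa [Function.update_of_ne hj, Function.update_of_ne hj] at this
    have hmem : ∀ j, j ≠ i → pf g' ∈ F' j (g j) := by
      intro j hj
      rw [hsame j hj]
      exact Set.mem_iInter.1 ((hig g' hg').1) j
    have := (hig g hg).2
    rw [higg] at this
    exact this (pf g') hmem
  -- the per-color count bound
  have hprodpos : (0:ℝ) < ∏ j, (n j : ℝ) := by
    apply Finset.prod_pos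
    intro j _
    exact_mod_cast hn j
  have hGoodpos : (0:ℝ) < Good.card := lt_of_lt_of_le (by positivity) h
  have hGoodne : Good.Nonempty := by
    rw [← Finset.card_pos]
    exact_mod_cast hGoodpos
  have hbound : ∀ i : Fin (d + 1),
      ((Good.filter fun g => ig g = i).card : ℝ) ≤ (α / (d + 1)) * ∏ j, (n j : ℝ) ∧
      ((Good.filter fun g => ig g = i).Nonempty →
        ((Good.filter fun g => ig g = i).card : ℝ) < (α / (d + 1)) * ∏ j, (n j : ℝ)) := by
    intro i
    set Fi := Good.filter fun g => ig g = i with hFi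
    set Bi := Fi.image (fun g => Function.update g i (d0 i)) with hBi
    have hcardsum : Fi.card = ∑ t ∈ Bi, (Fi.filter fun g => Function.update g i (d0 i) = t).card :=
      Finset.card_eq_sum_card_fiberwise (fun g hg => Finset.mem_image_of_mem _ hg)
    -- each fiber is strictly small
    have hfib : ∀ t ∈ Bi,
        ((Fi.filter fun g => Function.update g i (d0 i) = t).card : ℝ)
          < (α / (d + 1)) * (n i : ℝ) := by
      intro t ht
      obtain ⟨g0, hg0⟩ : (Fi.filter fun g => Function.update g i (d0 i) = t).Nonempty := by
        obtain ⟨g0, hg0Fi, hg0t⟩ := Finset.mem_image.1 ht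
        exact ⟨g0, Finset.mem_filter.2 ⟨hg0Fi, hg0t⟩⟩
      set fib := Fi.filter fun g => Function.update g i (d0 i) = t with hfibdef
      set q := pf g0 with hq
      have hg0Good : g0 ∈ Good := (Finset.mem_filter.1 (Finset.mem_filter.1 hg0).1).1
      have hg0i : ig g0 = i := (Finset.mem_filter.1 (Finset.mem_filter.1 hg0).1).2
      have hqeq : ∀ g ∈ fib, pf g = q := by
        intro g hg
        have hgGood : g ∈ Good := (Finset.mem_filter.1 (Finset.mem_filter.1 hg).1).1
        have hgi : ig g = i := (Finset.mem_filter.1 (Finset.mem_filter.1 hg).1).2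
        have hupd : Function.update g i (d0 i) = Function.update g0 i (d0 i) := by
          rw [(Finset.mem_filter.1 hg).2, (Finset.mem_filter.1 hg0).2]
        by_contra hne
        rcases lexLt_or hne with hl | hl
        · exact hfiber i g0 g hg0Good hgGood hg0i hgi hupd.symm hl
        · exact hfiber i g g0 hgGood hg0Good hgi hg0i hupd hl
      set G : Finset (Fin (n i)) := fib.image (fun g => g i) with hG
      have hGinter : (⋂ j ∈ G, F i j).Nonempty := by
        refine ⟨q, Set.mem_iInter₂.2 ?_⟩
        intro m hm
        obtain ⟨g, hgfib, rfl⟩ := Finset.mem_image.1 hm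
        have hgGood : g ∈ Good := (Finset.mem_filter.1 (Finset.mem_filter.1 hgfib).1).1
        rw [← hqeq g hgfib]
        exact hF'sub i (g i) (Set.mem_iInter.1 ((hig g hgGood).1) i)
      have hGsmall : (G.card : ℝ) < (α / (d + 1)) * (n i : ℝ) := by
        by_contra hle
        push_neg at hle
        have hempty := hcon i G hle
        rw [hempty] at hGinter
        exact Set.not_nonempty_empty hGinter
      have hcardeq : fib.card = G.card := by
        apply (Finset.card_image_of_injOn ?_).symm
        intro g hgf g' hgf' heq
        have h1 := (Finset.mem_filter.1 hgf).2
        have h2 := (Finset.mem_filter.1 hgf').2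
        funext j
        by_cases hj : j = i
        · subst hj; exact heq
        · have := congrFun (h1.trans h2.symm) j
          rwa [Function.update_of_ne hj, Function.update_of_ne hj] at this
      rw [hcardeq]
      exact hGsmall
    have hBicard : (Bi.card : ℝ) * ((α / (d + 1)) * (n i : ℝ)) ≤ (α / (d + 1)) * ∏ j, (n j : ℝ) := by
      have hsub : Bi ⊆ Finset.univ.filter fun t => t i = d0 i := by
        intro t ht
        obtain ⟨g, -, rfl⟩ := Finset.mem_image.1 ht
        simp
      have h1 : (Bi.card : ℝ) ≤ ((Finset.univ.filter
          fun t : (j : Fin (d+1)) → Fin (n j) => t i = d0 i).card : ℝ) := by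
        exact_mod_cast Finset.card_le_card hsub
      have h2 := card_fiber_eq n i (d0 i)
      have h2' : ((Finset.univ.filter fun t : (j : Fin (d+1)) → Fin (n j) => t i = d0 i).card : ℝ)
          * (n i : ℝ) = ∏ j, (n j : ℝ) := by
        exact_mod_cast h2
      calc (Bi.card : ℝ) * ((α / (d + 1)) * (n i : ℝ))
          ≤ ((Finset.univ.filter fun t : (j : Fin (d+1)) → Fin (n j) => t i = d0 i).card : ℝ)
            * ((α / (d + 1)) * (n i : ℝ)) := by
            apply mul_le_mul_of_nonneg_right h1
            have : (0:ℝ) < (n i : ℝ) := by exact_mod_cast hn i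
            positivity
        _ = (α / (d + 1)) * ∏ j, (n j : ℝ) := by rw [← h2']; ring
    constructor
    · calc (Fi.card : ℝ) = ∑ t ∈ Bi, ((Fi.filter fun g => Function.update g i (d0 i) = t).card : ℝ) := by
            exact_mod_cast hcardsum
      _ ≤ ∑ t ∈ Bi, (α / (d + 1)) * (n i : ℝ) :=
            Finset.sum_le_sum (fun t ht => (hfib t ht).le)
      _ = (Bi.card : ℝ) * ((α / (d + 1)) * (n i : ℝ)) := by
            rw [Finset.sum_const, nsmul_eq_mul]
      _ ≤ (α / (d + 1)) * ∏ j, (n j : ℝ) := hBicard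
    · intro hFine
      have hBine : Bi.Nonempty := hFine.image _
      calc (Fi.card : ℝ) = ∑ t ∈ Bi, ((Fi.filter fun g => Function.update g i (d0 i) = t).card : ℝ) := by
            exact_mod_cast hcardsum
      _ < ∑ t ∈ Bi, (α / (d + 1)) * (n i : ℝ) :=
            Finset.sum_lt_sum_of_nonempty hBine hfib
      _ = (Bi.card : ℝ) * ((α / (d + 1)) * (n i : ℝ)) := by
            rw [Finset.sum_const, nsmul_eq_mul]
      _ ≤ (α / (d + 1)) * ∏ j, (n j : ℝ) := hBicard
  -- assemble
  have hcard1 : (Good.card : ℝ) = ∑ i : Fin (d + 1), ((Good.filter fun g => ig g = i).card : ℝ) := by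
    exact_mod_cast Finset.card_eq_sum_card_fiberwise
      (f := fun g => ig g) (fun g _ => Finset.mem_univ (ig g))
  obtain ⟨g1, hg1⟩ := hGoodne
  have hstrict : (Good.card : ℝ) < ∑ _i : Fin (d + 1), (α / (d + 1)) * ∏ j, (n j : ℝ) := by
    rw [hcard1]
    apply Finset.sum_lt_sum (fun i _ => (hbound i).1)
    refine ⟨ig g1, Finset.mem_univ _, (hbound (ig g1)).2 ⟨g1, Finset.mem_filter.2 ⟨hg1, rfl⟩⟩⟩
  have hsum : ∑ _i : Fin (d + 1), (α / (d + 1)) * ∏ j, (n j : ℝ) = α * ∏ j, (n j : ℝ) := by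
    rw [Finset.sum_const, Finset.card_univ, Fintype.card_fin, nsmul_eq_mul]
    have : ((d:ℝ) + 1) ≠ 0 := by positivity
    push_cast
    field_simp
  rw [hsum] at hstrict
  exact absurd h (not_le.2 hstrict)
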